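/- (Functoriality of restriction on charge-conserving matrices.) Let w, M, N ≥ 1, let ψ : Fin M → Fin N be injective, and let A, B : Matrix (Fin w → Fin N) (Fin w → Fin N) ℂ be width-w charge-conserving matrices, i.e. A v u ≠ 0 implies there is a permutation σ : Equiv.Perm (Fin w) with v = u ∘ σ, and similarly for B. Define f^ψ A : Matrix (Fin w → Fin M) (Fin w → Fin M) ℂ by (f^ψ A) v u = A (ψ ∘ v) (ψ ∘ u). Then f^ψ (A * B) = (f^ψ A) * (f^ψ B). -/
import Mathlib


open Matrix

noncomputable section

/-- A width-w rank-N matrix is charge-conserving: a nonzero entry forces the row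
word to be a place-permutation of the column word. -/
def ChargeConservingW (w N : ℕ)
    (A : Matrix (Fin w → Fin N) (Fin w → Fin N) ℂ) : Prop :=
  ∀ v u : Fin w → Fin N, A v u ≠ 0 → ∃ σ : Equiv.Perm (Fin w), v = u ∘ σ

/-- Restriction of a width-w rank-N matrix along `ψ : Fin M → Fin N`. -/
def restrictW (w M N : ℕ) (ψ : Fin M → Fin N)
    (A : Matrix (Fin w → Fin N) (Fin w → Fin N) ℂ) :
    Matrix (Fin w → Fin M) (Fin w → Fin M) ℂ :=
  Matrix.of fun v u => A (ψ ∘ v) (ψ ∘ u)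

theorem stmt11 (w M N : ℕ) (hw : 1 ≤ w) (hM : 1 ≤ M) (hN : 1 ≤ N)
    (ψ : Fin M → Fin N) (hψ : Function.Injective ψ)
    (A B : Matrix (Fin w → Fin N) (Fin w → Fin N) ℂ)
    (hA : ChargeConservingW w N A) (hB : ChargeConservingW w N B) :
    restrictW w M N ψ (A * B) = restrictW w M N ψ A * restrictW w M N ψ B := by
  ext v u
  simp only [restrictW, Matrix.mul_apply, Matrix.of_apply]
  have hg : Function.Injective (fun x : Fin w → Fin M => ψ ∘ x) := by
    intro a b h
    funext i
    exact hψ (congrFun h i)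
  have h1 : ∑ j : Fin w → Fin N, A (ψ ∘ v) j * B j (ψ ∘ u)
      = ∑ j ∈ Finset.univ.image (fun x : Fin w → Fin M => ψ ∘ x),
          A (ψ ∘ v) j * B j (ψ ∘ u) := by
    refine (Finset.sum_subset (Finset.subset_univ _) ?_).symm
    intro x _ hx
    by_contra hne
    have hBne : B x (ψ ∘ u) ≠ 0 := fun h => hne (by rw [h, mul_zero])
    obtain ⟨σ, hσ⟩ := hB x (ψ ∘ u) hBne
    exact hx (Finset.mem_image.2 ⟨u ∘ σ, Finset.mem_univ _, by rw [hσ]; rfl⟩)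
  rw [h1, Finset.sum_image (fun a _ b _ h => hg h)]
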